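/- Consider a scheduling game with rank-based utilities on two identical machines with n = 2ℓ unit jobs (ℓ ≥ 1) and arbitrary priority lists π₁, π₂, and let s be a pure Nash equilibrium. Then: (a) each machine is assigned exactly ℓ jobs; (b) writing j_{ik} for the unique job assigned to M_i with completion time k (for i ∈ {1,2} and 1 ≤ k ≤ ℓ), for every 1 ≤ k ≤ ℓ and every job w whose completion time in s is strictly greater than k: if w ≠ j_{2k} then π₁(j_{1k}) < π₁(w), and if w ≠ j_{1k} then π₂(j_{2k}) < π₂(w); (c) π₁(j_{1ℓ}) < π₁(j_{2ℓ}) and π₂(j_{2ℓ}) < π₂(j_{1ℓ}). -/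
import Mathlib


open Finset
open scoped Classical

noncomputable section

variable {J M : Type*} [Fintype J]

/-- Completion time of job `j` in profile `s`: the total processing time of the jobs on
`j`'s machine that do not come after `j` in that machine's priority list, divided by the speed. -/
def Ctime (p : J → ℝ) (r : M → ℝ) (π : M → J → ℕ) (s : J → M) (j : J) : ℝ :=
  (∑ j' ∈ univ.filter (fun j' => s j' = s j ∧ π (s j) j' ≤ π (s j) j), p j') / r (s j)

/-- Rank of job `j` in profile `s`. -/
def rankOf (p : J → ℝ) (r : M → ℝ) (π : M → J → ℕ) (s : J → M) (j : J) : ℝ :=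
  ((univ.filter (fun j' => Ctime p r π s j' < Ctime p r π s j)).card : ℝ) +
    (((univ.filter (fun j' => Ctime p r π s j' = Ctime p r π s j)).card : ℝ) + 1) / 2

/-- The unilateral deviation of job `j` to machine `i` is beneficial. -/
def Beneficial (p : J → ℝ) (r : M → ℝ) (π : M → J → ℕ) (s : J → M) (j : J) (i : M) : Prop :=
  rankOf p r π (Function.update s j i) j < rankOf p r π s j ∨
    (rankOf p r π (Function.update s j i) j = rankOf p r π s j ∧
      Ctime p r π (Function.update s j i) j < Ctime p r π s j)

/-- Pure Nash equilibrium: no job has a beneficial deviation. -/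
def IsNE (p : J → ℝ) (r : M → ℝ) (π : M → J → ℕ) (s : J → M) : Prop :=
  ∀ j i, ¬ Beneficial p r π s j i

/- ## Auxiliary development -/

def Tval (π : Fin 2 → J → ℕ) (s : J → Fin 2) (j : J) : ℕ :=
  (univ.filter (fun j' => s j' = s j ∧ π (s j) j' ≤ π (s j) j)).card

def loadOf (s : J → Fin 2) (i : Fin 2) : ℕ := (univ.filter (fun j => s j = i)).card

lemma filter_irrel {α : Type*} (q : α → Prop) (t : Finset α) (i1 i2 : DecidablePred q) :
    @Finset.filter α q i1 t = @Finset.filter α q i2 t :=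
  congrArg (fun d => @Finset.filter α q d t) (funext fun a => Subsingleton.elim _ _)

lemma Ctime_eq (π : Fin 2 → J → ℕ) (s : J → Fin 2) (j : J) :
    Ctime (fun _ => (1:ℝ)) (fun _ => (1:ℝ)) π s j = (Tval π s j : ℝ) := by
  unfold Ctime Tval
  simp only [div_one, Finset.sum_const, nsmul_eq_mul, mul_one, Nat.cast_inj]
  exact congrArg Finset.card (filter_irrel _ _ _ _)

lemma T_pos (π : Fin 2 → J → ℕ) (s : J → Fin 2) (j : J) : 1 ≤ Tval π s j := by
  refine Finset.card_pos.mpr ⟨j, ?_⟩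
  simp

lemma T_le_load (π : Fin 2 → J → ℕ) (s : J → Fin 2) (j : J) : Tval π s j ≤ loadOf s (s j) := by
  apply Finset.card_le_card
  intro x hx
  simp only [Finset.mem_filter, Finset.mem_univ, true_and] at *
  exact hx.1

lemma T_mono (π : Fin 2 → J → ℕ) (s : J → Fin 2) {j j' : J} (h : s j = s j')
    (hp : π (s j) j ≤ π (s j) j') : Tval π s j ≤ Tval π s j' := by
  apply Finset.card_le_card
  intro x hx
  simp only [Finset.mem_filter, Finset.mem_univ, true_and] at *
  rw [← h]
  exact ⟨hx.1, hx.2.trans hp⟩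

lemma T_lt (π : Fin 2 → J → ℕ) (s : J → Fin 2) {j j' : J} (h : s j = s j')
    (hp : π (s j) j < π (s j) j') : Tval π s j < Tval π s j' := by
  unfold Tval
  have hsub : (univ.filter fun y => s y = s j ∧ π (s j) y ≤ π (s j) j)
      ⊆ (univ.filter fun y => s y = s j' ∧ π (s j') y ≤ π (s j') j') := by
    intro x hx
    simp only [Finset.mem_filter, Finset.mem_univ, true_and] at *
    rw [← h]
    exact ⟨hx.1, hx.2.trans hp.le⟩
  have hmem : j' ∈ (univ.filter fun y => s y = s j' ∧ π (s j') y ≤ π (s j') j') := by simp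
  have hnot : j' ∉ (univ.filter fun y => s y = s j ∧ π (s j) y ≤ π (s j) j) := by
    simp only [Finset.mem_filter, Finset.mem_univ, true_and, not_and]
    intro _
    omega
  exact Finset.card_lt_card ((Finset.ssubset_iff_of_subset hsub).mpr ⟨j', hmem, hnot⟩)

lemma T_inj (π : Fin 2 → J → ℕ) (hπ : ∀ i, Function.Injective (π i)) (s : J → Fin 2) {j j' : J}
    (h : s j = s j') (hT : Tval π s j = Tval π s j') : j = j' := by
  rcases lt_trichotomy (π (s j) j) (π (s j) j') with hlt | heq | hgt
  · exact absurd (T_lt π s h hlt) (by omega)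
  · exact hπ (s j) heq
  · have := T_lt π s h.symm (by rw [← h]; exact hgt)
    omega

lemma T_surj (π : Fin 2 → J → ℕ) (hπ : ∀ i, Function.Injective (π i)) (s : J → Fin 2) (i : Fin 2)
    {k : ℕ} (hk1 : 1 ≤ k) (hk2 : k ≤ loadOf s i) : ∃ j, s j = i ∧ Tval π s j = k := by
  have hmaps : ∀ j (hj : j ∈ univ.filter (fun j => s j = i)),
      Tval π s j ∈ Finset.Icc 1 (loadOf s i) := by
    intro j hj
    simp only [Finset.mem_filter, Finset.mem_univ, true_and] at hj
    rw [Finset.mem_Icc]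
    refine ⟨T_pos π s j, ?_⟩
    rw [← hj]
    exact T_le_load π s j
  have hinj : ∀ (a b : J), a ∈ univ.filter (fun j => s j = i) →
      b ∈ univ.filter (fun j => s j = i) → Tval π s a = Tval π s b → a = b := by
    intro a b ha hb hab
    simp only [Finset.mem_filter, Finset.mem_univ, true_and] at ha hb
    exact T_inj π hπ s (by rw [ha, hb]) hab
  have hcard : (Finset.Icc 1 (loadOf s i)).card ≤ (univ.filter (fun j => s j = i)).card := by
    rw [Nat.card_Icc]
    unfold loadOf
    omega
  obtain ⟨j, hj, hjk⟩ := Finset.surj_on_of_inj_on_of_card_le (fun j _ => Tval π s j)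
    hmaps hinj hcard k (Finset.mem_Icc.mpr ⟨hk1, hk2⟩)
  simp only [Finset.mem_filter, Finset.mem_univ, true_and] at hj
  exact ⟨j, hj, hjk.symm⟩

lemma card_T_lt (π : Fin 2 → J → ℕ) (hπ : ∀ i, Function.Injective (π i)) (s : J → Fin 2) (i : Fin 2)
    (t : ℕ) : (univ.filter (fun j => s j = i ∧ Tval π s j < t)).card
      = min (loadOf s i) (t - 1) := by
  have key : (univ.filter (fun j => s j = i ∧ Tval π s j < t)).card
      = (Finset.Icc 1 (min (loadOf s i) (t - 1))).card := by
    apply Finset.card_bij (fun j _ => Tval π s j)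
    · intro a ha
      simp only [Finset.mem_filter, Finset.mem_univ, true_and] at ha
      rw [Finset.mem_Icc]
      have h1 := T_pos π s a
      have h2 : Tval π s a ≤ loadOf s i := by rw [← ha.1]; exact T_le_load π s a
      have h3 := ha.2
      omega
    · intro a ha b hb hab
      simp only [Finset.mem_filter, Finset.mem_univ, true_and] at ha hb
      exact T_inj π hπ s (by rw [ha.1, hb.1]) hab
    · intro b hb
      rw [Finset.mem_Icc] at hb
      have hb2 : b ≤ loadOf s i := le_trans hb.2 (min_le_left _ _)
      obtain ⟨j, hj1, hj2⟩ := T_surj π hπ s i hb.1 hb2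
      refine ⟨j, ?_, hj2⟩
      simp only [Finset.mem_filter, Finset.mem_univ, true_and]
      have := hb.2
      have := hb.1
      constructor
      · exact hj1
      · omega
  rw [key, Nat.card_Icc]
  omega

lemma card_T_eq (π : Fin 2 → J → ℕ) (hπ : ∀ i, Function.Injective (π i)) (s : J → Fin 2) (i : Fin 2)
    (t : ℕ) (ht : 1 ≤ t) : (univ.filter (fun j => s j = i ∧ Tval π s j = t)).card
      = if t ≤ loadOf s i then 1 else 0 := by
  split_ifs with h
  · obtain ⟨j, hj1, hj2⟩ := T_surj π hπ s i ht h
    rw [Finset.card_eq_one]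
    refine ⟨j, ?_⟩
    ext x
    simp only [Finset.mem_filter, Finset.mem_univ, true_and, Finset.mem_singleton]
    constructor
    · rintro ⟨hx1, hx2⟩
      exact T_inj π hπ s (by rw [hx1, hj1]) (by rw [hx2, hj2])
    · rintro rfl
      exact ⟨hj1, hj2⟩
  · rw [Finset.card_eq_zero, Finset.filter_eq_empty_iff]
    rintro x _ ⟨hx1, hx2⟩
    have := T_le_load π s x
    rw [hx1, hx2] at this
    omega

lemma split_card (s : J → Fin 2) (P : J → Prop) [DecidablePred P] :
    (univ.filter P).card
      = (univ.filter (fun j => s j = 0 ∧ P j)).card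
        + (univ.filter (fun j => s j = 1 ∧ P j)).card := by
  have h := Finset.card_filter_add_card_filter_not
    (s := univ.filter P) (p := fun j => s j = 0)
  rw [Finset.filter_filter, Finset.filter_filter] at h
  have h2 : ∀ x : Fin 2, ¬ x = 0 ↔ x = 1 := by decide
  have e1 : univ.filter (fun j => P j ∧ s j = 0) = univ.filter (fun j => s j = 0 ∧ P j) := by
    apply Finset.filter_congr
    intro x _
    tauto
  have e2 : univ.filter (fun j => P j ∧ ¬ s j = 0) = univ.filter (fun j => s j = 1 ∧ P j) := by
    apply Finset.filter_congr
    intro x _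
    rw [h2]
    tauto
  rw [e1, e2] at h
  omega

lemma load_sum (s : J → Fin 2) : loadOf s 0 + loadOf s 1 = Fintype.card J := by
  unfold loadOf
  have e2 : univ.filter (fun j : J => ¬ s j = 0) = univ.filter (fun j => s j = 1) := by
    apply Finset.filter_congr
    intro x _
    exact (by decide : ∀ y : Fin 2, ¬ y = 0 ↔ y = 1) (s x)
  rw [← e2, Finset.card_filter_add_card_filter_not, Finset.card_univ]

lemma rank_eq (π : Fin 2 → J → ℕ) (hπ : ∀ i, Function.Injective (π i)) (s : J → Fin 2)
    (j : J) : rankOf (fun _ => (1:ℝ)) (fun _ => (1:ℝ)) π s j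
      = ((min (loadOf s 0) (Tval π s j - 1) + min (loadOf s 1) (Tval π s j - 1) : ℕ) : ℝ)
        + ((((if Tval π s j ≤ loadOf s 0 then (1:ℕ) else 0)
            + (if Tval π s j ≤ loadOf s 1 then (1:ℕ) else 0) : ℕ) : ℝ) + 1) / 2 := by
  have hC : ∀ x, Ctime (fun _ => (1:ℝ)) (fun _ => (1:ℝ)) π s x = (Tval π s x : ℝ) :=
    Ctime_eq π s
  unfold rankOf
  simp only [hC, Nat.cast_lt, Nat.cast_inj]
  rw [show (univ.filter (fun j' => Tval π s j' < Tval π s j)).card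
      = (univ.filter (fun j' => s j' = 0 ∧ Tval π s j' < Tval π s j)).card
        + (univ.filter (fun j' => s j' = 1 ∧ Tval π s j' < Tval π s j)).card from
      split_card s _,
    show (univ.filter (fun j' => Tval π s j' = Tval π s j)).card
      = (univ.filter (fun j' => s j' = 0 ∧ Tval π s j' = Tval π s j)).card
        + (univ.filter (fun j' => s j' = 1 ∧ Tval π s j' = Tval π s j)).card from
      split_card s _]
  rw [card_T_lt π hπ s 0 (Tval π s j), card_T_lt π hπ s 1 (Tval π s j),
    card_T_eq π hπ s 0 (Tval π s j) (T_pos π s j), card_T_eq π hπ s 1 (Tval π s j) (T_pos π s j)]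

lemma half_lt {a b c d : ℕ} (h : 2*a + b < 2*c + d) :
    ((a:ℝ)) + (((b:ℝ)) + 1) / 2 < ((c:ℝ)) + (((d:ℝ)) + 1) / 2 := by
  have h' : (2*a + b : ℝ) < 2*c + d := by exact_mod_cast h
  push_cast at h'
  linarith

lemma load_update_self (s : J → Fin 2) (j : J) (i i' : Fin 2) (h : s j = i) (hii : i' ≠ i) :
    loadOf (Function.update s j i') i' = loadOf s i' + 1 := by
  unfold loadOf
  have e : univ.filter (fun x => Function.update s j i' x = i')
      = insert j (univ.filter (fun x => s x = i')) := by
    ext x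
    by_cases hx : x = j
    · subst hx
      simp [Function.update_self]
    · simp [Function.update_of_ne hx, hx]
  rw [e, Finset.card_insert_of_notMem]
  simp only [Finset.mem_filter, Finset.mem_univ, true_and, h]
  exact Ne.symm hii

lemma load_update_old (s : J → Fin 2) (j : J) (i i' : Fin 2) (h : s j = i) (hii : i' ≠ i) :
    loadOf (Function.update s j i') i = loadOf s i - 1 := by
  unfold loadOf
  have e : univ.filter (fun x => Function.update s j i' x = i)
      = (univ.filter (fun x => s x = i)).erase j := by
    ext x
    by_cases hx : x = j
    · subst hx
      simp [Function.update_self, hii]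
    · simp [Function.update_of_ne hx, hx]
  rw [e, Finset.card_erase_of_mem]
  simp [h]

lemma T_update (π : Fin 2 → J → ℕ) (s : J → Fin 2) (j : J) (i' : Fin 2) (h : s j ≠ i') :
    Tval π (Function.update s j i') j
      = (univ.filter (fun x => s x = i' ∧ π i' x ≤ π i' j)).card + 1 := by
  have hsj : Function.update s j i' j = i' := Function.update_self j i' s
  unfold Tval
  rw [hsj]
  have e : univ.filter (fun x => Function.update s j i' x = i' ∧ π i' x ≤ π i' j)
      = insert j (univ.filter (fun x => s x = i' ∧ π i' x ≤ π i' j)) := by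
    ext x
    by_cases hx : x = j
    · subst hx
      simp [hsj]
    · simp [Function.update_of_ne hx, hx]
  rw [e, Finset.card_insert_of_notMem]
  simp only [Finset.mem_filter, Finset.mem_univ, true_and, not_and]
  intro hc
  exact absurd hc h

lemma card_le_T (π : Fin 2 → J → ℕ) (s : J → Fin 2) (i : Fin 2) (v w : J) (hv : s v = i)
    (hvw : π i w < π i v) :
    (univ.filter (fun x => s x = i ∧ π i x ≤ π i w)).card + 1 ≤ Tval π s v := by
  have hTv : Tval π s v = (univ.filter (fun x => s x = i ∧ π i x ≤ π i v)).card := by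
    unfold Tval
    rw [hv]
  have hmem : v ∈ univ.filter (fun x => s x = i ∧ π i x ≤ π i v) := by simp [hv]
  have hsub : univ.filter (fun x => s x = i ∧ π i x ≤ π i w)
      ⊆ (univ.filter (fun x => s x = i ∧ π i x ≤ π i v)).erase v := by
    intro x hx
    simp only [Finset.mem_filter, Finset.mem_univ, true_and] at hx
    rw [Finset.mem_erase]
    constructor
    · rintro rfl
      omega
    · simp only [Finset.mem_filter, Finset.mem_univ, true_and]
      exact ⟨hx.1, by omega⟩
  have h1 := Finset.card_le_card hsub
  rw [Finset.card_erase_of_mem hmem] at h1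
  have h2 : 0 < (univ.filter (fun x => s x = i ∧ π i x ≤ π i v)).card :=
    Finset.card_pos.mpr ⟨v, hmem⟩
  omega

lemma not_heavy (π : Fin 2 → J → ℕ) (hπ : ∀ i, Function.Injective (π i)) (s : J → Fin 2)
    (i i' : Fin 2) (hii : i ≠ i') (h : loadOf s i' + 2 ≤ loadOf s i) :
    ¬ IsNE (fun _ => (1:ℝ)) (fun _ => (1:ℝ)) π s := by
  intro hNE
  obtain ⟨j, hj, hTj⟩ := T_surj π hπ s i (by omega) le_rfl
  have hwi : s j = i := hj
  have hnew : loadOf (Function.update s j i') i' = loadOf s i' + 1 :=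
    load_update_self s j i i' hj (Ne.symm hii)
  have hold : loadOf (Function.update s j i') i = loadOf s i - 1 :=
    load_update_old s j i i' hj (Ne.symm hii)
  have hs'j : Function.update s j i' j = i' := Function.update_self j i' s
  have ht'1 : 1 ≤ Tval π (Function.update s j i') j := T_pos π _ j
  have ht'2 : Tval π (Function.update s j i') j ≤ loadOf s i' + 1 := by
    have h2 := T_le_load π (Function.update s j i') j
    rw [hs'j, hnew] at h2
    exact h2
  have hcase : (i = 0 ∧ i' = 1) ∨ (i = 1 ∧ i' = 0) := by
    revert hii
    fin_cases i <;> fin_cases i' <;> decide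
  have hrank : rankOf (fun _ => (1:ℝ)) (fun _ => (1:ℝ)) π (Function.update s j i') j
      < rankOf (fun _ => (1:ℝ)) (fun _ => (1:ℝ)) π s j := by
    rw [rank_eq π hπ (Function.update s j i') j, rank_eq π hπ s j]
    apply half_lt
    rcases hcase with ⟨hi, hi'⟩ | ⟨hi, hi'⟩ <;> subst hi <;> subst hi' <;>
      rw [hnew, hold] <;> split_ifs <;> omega
  exact hNE j i' (Or.inl hrank)

lemma key {ℓ : ℕ} (π : Fin 2 → J → ℕ) (hπ : ∀ i, Function.Injective (π i)) (s : J → Fin 2)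
    (hl0 : loadOf s 0 = ℓ) (hl1 : loadOf s 1 = ℓ)
    (hNE : IsNE (fun _ => (1:ℝ)) (fun _ => (1:ℝ)) π s)
    (i i' : Fin 2) (hii : i ≠ i') (v w : J) (hv : s v = i) (hw : s w = i')
    (hpi : π i w < π i v)
    (hcase : Tval π s v < Tval π s w ∨ (Tval π s v = ℓ ∧ Tval π s w = ℓ)) : False := by
  have hli : loadOf s i = ℓ := by fin_cases i <;> assumption
  have hli' : loadOf s i' = ℓ := by fin_cases i' <;> assumption
  have hwi : s w ≠ i := by rw [hw]; exact Ne.symm hii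
  have hnew : loadOf (Function.update s w i) i = loadOf s i + 1 :=
    load_update_self s w i' i hw hii
  have hold : loadOf (Function.update s w i) i' = loadOf s i' - 1 :=
    load_update_old s w i' i hw hii
  have hs'w : Function.update s w i w = i := Function.update_self w i s
  have hT' : Tval π (Function.update s w i) w ≤ Tval π s v := by
    rw [T_update π s w i hwi]
    exact card_le_T π s i v w hv hpi
  have ht'1 : 1 ≤ Tval π (Function.update s w i) w := T_pos π _ w
  have htw1 : 1 ≤ Tval π s w := T_pos π s w
  have htw2 : Tval π s w ≤ ℓ := by
    have h2 := T_le_load π s w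
    rw [hw, hli'] at h2
    exact h2
  have htv1 : 1 ≤ Tval π s v := T_pos π s v
  have htv2 : Tval π s v ≤ ℓ := by
    have h2 := T_le_load π s v
    rw [hv, hli] at h2
    exact h2
  have hcase2 : (i = 0 ∧ i' = 1) ∨ (i = 1 ∧ i' = 0) := by
    revert hii
    fin_cases i <;> fin_cases i' <;> decide
  have hrank : rankOf (fun _ => (1:ℝ)) (fun _ => (1:ℝ)) π (Function.update s w i) w
      < rankOf (fun _ => (1:ℝ)) (fun _ => (1:ℝ)) π s w := by
    rw [rank_eq π hπ (Function.update s w i) w, rank_eq π hπ s w]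
    apply half_lt
    rcases hcase2 with ⟨hi, hi'⟩ | ⟨hi, hi'⟩ <;> subst hi <;> subst hi' <;>
      rw [hnew, hold] <;> rw [hli, hli'] at * <;> split_ifs <;> omega
  exact hNE w i (Or.inl hrank)

/-- Structure of NE profiles for `2ℓ` unit jobs on two identical machines. -/
theorem NE_structure (ℓ : ℕ) (hℓ : 1 ≤ ℓ) (n : ℕ) (hn : n = 2 * ℓ)
    (π : Fin 2 → Fin n → ℕ) (hπ : ∀ i, Function.Injective (π i))
    (s : Fin n → Fin 2)
    (hNE : IsNE (fun _ => (1:ℝ)) (fun _ => (1:ℝ)) π s) :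
    (∀ i, (univ.filter (fun j => s j = i)).card = ℓ) ∧
    (∀ k : ℕ, 1 ≤ k → k ≤ ℓ → ∀ j1k j2k : Fin n,
      s j1k = 0 → Ctime (fun _ => (1:ℝ)) (fun _ => (1:ℝ)) π s j1k = (k : ℝ) →
      s j2k = 1 → Ctime (fun _ => (1:ℝ)) (fun _ => (1:ℝ)) π s j2k = (k : ℝ) →
      ∀ w, (k : ℝ) < Ctime (fun _ => (1:ℝ)) (fun _ => (1:ℝ)) π s w →
        (w ≠ j2k → π 0 j1k < π 0 w) ∧ (w ≠ j1k → π 1 j2k < π 1 w)) ∧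
    (∀ j1 j2 : Fin n,
      s j1 = 0 → Ctime (fun _ => (1:ℝ)) (fun _ => (1:ℝ)) π s j1 = (ℓ : ℝ) →
      s j2 = 1 → Ctime (fun _ => (1:ℝ)) (fun _ => (1:ℝ)) π s j2 = (ℓ : ℝ) →
      π 0 j1 < π 0 j2 ∧ π 1 j2 < π 1 j1) := by
  have hsum : loadOf s 0 + loadOf s 1 = n := by
    rw [load_sum s, Fintype.card_fin]
  have h01 : ¬ (loadOf s 1 + 2 ≤ loadOf s 0) := fun h =>
    not_heavy π hπ s 0 1 (by decide) h hNE
  have h10 : ¬ (loadOf s 0 + 2 ≤ loadOf s 1) := fun h =>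
    not_heavy π hπ s 1 0 (by decide) h hNE
  have hL0 : loadOf s 0 = ℓ := by omega
  have hL1 : loadOf s 1 = ℓ := by omega
  have two : ∀ x : Fin 2, x = 0 ∨ x = 1 := by decide
  have hTC : ∀ (j : Fin n) (k : ℕ),
      Ctime (fun _ => (1:ℝ)) (fun _ => (1:ℝ)) π s j = (k : ℝ) → Tval π s j = k := by
    intro j k hk
    rw [Ctime_eq π s j] at hk
    exact_mod_cast hk
  refine ⟨?_, ?_, ?_⟩
  · intro i
    rcases two i with rfl | rfl
    · exact hL0
    · exact hL1
  · intro k hk1 hk2 j1k j2k hs1 hC1 hs2 hC2 w hw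
    have hT1 : Tval π s j1k = k := hTC j1k k hC1
    have hT2 : Tval π s j2k = k := hTC j2k k hC2
    have hTw : k < Tval π s w := by
      rw [Ctime_eq π s w] at hw
      exact_mod_cast hw
    constructor
    · intro _
      rcases two (s w) with hsw | hsw
      · -- same machine as j1k
        by_contra hcon
        push_neg at hcon
        have := T_mono π s (j := w) (j' := j1k) (by rw [hsw, hs1]) (by rw [hsw]; exact hcon)
        omega
      · by_contra hcon
        push_neg at hcon
        have hne : π 0 j1k ≠ π 0 w := by
          intro he
          have : j1k = w := hπ 0 he
          rw [this, hsw] at hs1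
          exact absurd hs1 (by decide)
        have hlt : π 0 w < π 0 j1k := lt_of_le_of_ne hcon (fun he => hne he.symm)
        exact key π hπ s hL0 hL1 hNE 0 1 (by decide) j1k w hs1 hsw hlt
          (Or.inl (by omega))
    · intro _
      rcases two (s w) with hsw | hsw
      · by_contra hcon
        push_neg at hcon
        have hne : π 1 j2k ≠ π 1 w := by
          intro he
          have : j2k = w := hπ 1 he
          rw [this, hsw] at hs2
          exact absurd hs2 (by decide)
        have hlt : π 1 w < π 1 j2k := lt_of_le_of_ne hcon (fun he => hne he.symm)
        exact key π hπ s hL0 hL1 hNE 1 0 (by decide) j2k w hs2 hsw hlt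
          (Or.inl (by omega))
      · by_contra hcon
        push_neg at hcon
        have := T_mono π s (j := w) (j' := j2k) (by rw [hsw, hs2]) (by rw [hsw]; exact hcon)
        omega
  · intro j1 j2 hs1 hC1 hs2 hC2
    have hT1 : Tval π s j1 = ℓ := hTC j1 ℓ hC1
    have hT2 : Tval π s j2 = ℓ := hTC j2 ℓ hC2
    have hne : j1 ≠ j2 := by
      intro he
      rw [he, hs2] at hs1
      exact absurd hs1 (by decide)
    constructor
    · by_contra hcon
      push_neg at hcon
      have hlt : π 0 j2 < π 0 j1 :=
        lt_of_le_of_ne hcon (fun he => hne (hπ 0 he.symm))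
      exact key π hπ s hL0 hL1 hNE 0 1 (by decide) j1 j2 hs1 hs2 hlt
        (Or.inr ⟨hT1, hT2⟩)
    · by_contra hcon
      push_neg at hcon
      have hlt : π 1 j1 < π 1 j2 :=
        lt_of_le_of_ne hcon (fun he => hne (hπ 1 he))
      exact key π hπ s hL0 hL1 hNE 1 0 (by decide) j2 j1 hs2 hs1 hlt
        (Or.inr ⟨hT2, hT1⟩)
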